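/- Let k ≥ 5, r = (r_0,...,r_{k−1}) a k-tuple of positive integers, and h an integer with 2 ≤ h ≤ Σ r_j − 2. If A is a set of k integers, then |h^{(r)}A| = L(r,h) if and only if A is a k-term arithmetic progression. -/

import Mathlib

open Finset

/-- A step `U → W`: some coordinate `j` decreases by 1 and coordinate `j+1` increases by 1. -/
def IsStep (k : ℕ) (U W : ℕ → ℕ) : Prop :=
  ∃ j, j + 1 < k ∧ U j = W j + 1 ∧ W (j + 1) = U (j + 1) + 1 ∧
    ∀ i, i ≠ j → i ≠ j + 1 → W i = U i

/-- Membership in `R(r,h)`: a `k`-tuple of nonnegative integers with `x i ≤ r i` and `∑ x i = h`. -/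
def InR (k : ℕ) (r : ℕ → ℕ) (h : ℕ) (x : ℕ → ℕ) : Prop :=
  (∀ i < k, x i ≤ r i) ∧ (∀ i, k ≤ i → x i = 0) ∧ ∑ i ∈ Finset.range k, x i = h

/-- The general `h`-fold sumset `h^{(r)}A` for `A = {a 0 < a 1 < ⋯ < a (k-1)}`. -/
def genSumset (k : ℕ) (a : ℕ → ℤ) (r : ℕ → ℕ) (h : ℕ) : Set ℤ :=
  {z | ∃ s : ℕ → ℕ, (∀ i < k, s i ≤ r i) ∧ (∑ i ∈ Finset.range k, s i = h) ∧
    z = ∑ i ∈ Finset.range k, (s i : ℤ) * a i}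

/-- The quantity `L(r,h)` in terms of `I`, `M`, `δ`, `θ`. -/
def Lval (k I M : ℕ) (r : ℕ → ℕ) (δ θ : ℕ) : ℤ :=
  (∑ j ∈ Finset.Ico (M + 1) k, (j : ℤ) * r j) - (∑ j ∈ Finset.range I, (j : ℤ) * r j)
    + (M : ℤ) * θ - (I : ℤ) * δ + 1

/-- The weighted sum `S(X) = ∑ j·x j`. -/
def Sw (k : ℕ) (x : ℕ → ℕ) : ℤ := ∑ j ∈ Finset.range k, (j : ℤ) * x j

/-- An `(r,h)`-path of length `t`: `P 1 → P 2 → ⋯ → P t`, all in `R(r,h)`. -/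
def IsPath (k : ℕ) (r : ℕ → ℕ) (h t : ℕ) (P : ℕ → ℕ → ℕ) : Prop :=
  (∀ i, 1 ≤ i → i ≤ t → InR k r h (P i)) ∧
  (∀ i, 1 ≤ i → i < t → IsStep k (P i) (P (i + 1)))

def aSum (k : ℕ) (a : ℕ → ℤ) (s : ℕ → ℕ) : ℤ := ∑ i ∈ Finset.range k, (s i : ℤ) * a i

/-- greedy distribution lemma -/
lemma exists_dist : ∀ (k n : ℕ) (c : ℕ → ℕ), n ≤ ∑ i ∈ range k, c i →
    ∃ x : ℕ → ℕ, (∀ i, x i ≤ c i) ∧ (∀ i, k ≤ i → x i = 0) ∧ ∑ i ∈ range k, x i = n := by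
  intro k
  induction k with
  | zero => intro n c hn; simp at hn; exact ⟨fun _ => 0, by simp, by simp, by simp [hn]⟩
  | succ k ih =>
    intro n c hn
    obtain ⟨x, hx1, hx2, hx3⟩ := ih (min n (∑ i ∈ range k, c i)) c (min_le_right _ _)
    rw [Finset.sum_range_succ] at hn
    refine ⟨fun i => if i = k then n - min n (∑ i ∈ range k, c i) else x i, ?_, ?_, ?_⟩
    · intro i
      beta_reduce
      by_cases hi : i = k
      · subst hi; rw [if_pos rfl]; omega
      · simpa [hi] using hx1 i
    · intro i hi
      beta_reduce
      have : i ≠ k := by omega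
      simp only [if_neg this]
      exact hx2 i (by omega)
    · rw [Finset.sum_range_succ, if_pos rfl]
      have : ∑ i ∈ range k, (if i = k then n - min n (∑ i ∈ range k, c i) else x i) =
          ∑ i ∈ range k, x i := by
        apply Finset.sum_congr rfl
        intro i hi
        rw [if_neg (by simp at hi; omega)]
      rw [this, hx3]
      omega

lemma sum_ind (k j : ℕ) (hj : j < k) (f : ℕ → ℤ) :
    ∑ i ∈ range k, (if i = j then f i else 0) = f j := by
  rw [Finset.sum_ite_eq' (range k) j f]; simp [hj]

def stepT (s : ℕ → ℕ) (j : ℕ) : ℕ → ℕ :=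
  fun i => if i = j then s j - 1 else if i = j + 1 then s (j+1) + 1 else s i

lemma step_props (k h : ℕ) (r : ℕ → ℕ) (a : ℕ → ℤ) (s : ℕ → ℕ) (j : ℕ)
    (hs : InR k r h s) (hj : j + 1 < k) (h1 : 1 ≤ s j) (h2 : s (j+1) < r (j+1)) :
    InR k r h (stepT s j) ∧ Sw k (stepT s j) = Sw k s + 1 ∧
      aSum k a (stepT s j) = aSum k a s + (a (j+1) - a j) := by
  obtain ⟨hc, hz, hsum⟩ := hs
  have hne : j ≠ j + 1 := by omega
  have key : ∀ i, ((stepT s j) i : ℤ) =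
      (s i : ℤ) + (if i = j then (-1 : ℤ) else 0) + (if i = j + 1 then (1 : ℤ) else 0) := by
    intro i
    unfold stepT
    by_cases hij : i = j
    · subst hij; rw [if_pos rfl, if_pos rfl, if_neg hne]; push_cast [h1]; ring
    · by_cases hij1 : i = j + 1
      · subst hij1; rw [if_neg hij, if_neg hij, if_pos rfl, if_pos rfl]; push_cast; ring
      · rw [if_neg hij, if_neg hij, if_neg hij1, if_neg hij1]; ring
  have hsumZ : ∑ i ∈ range k, ((stepT s j) i : ℤ) = ∑ i ∈ range k, (s i : ℤ) := by
    simp only [key, Finset.sum_add_distrib]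
    rw [sum_ind k j (by omega) (fun _ => (-1 : ℤ)), sum_ind k (j+1) hj (fun _ => (1 : ℤ))]
    ring
  refine ⟨⟨?_, ?_, ?_⟩, ?_, ?_⟩
  · intro i hi
    unfold stepT
    by_cases hij : i = j
    · subst hij; rw [if_pos rfl]; exact le_trans (Nat.sub_le _ _) (hc _ hi)
    · by_cases hij1 : i = j + 1
      · subst hij1; rw [if_neg hij, if_pos rfl]; omega
      · rw [if_neg hij, if_neg hij1]; exact hc _ hi
  · intro i hi
    unfold stepT
    rw [if_neg (by omega), if_neg (by omega)]
    exact hz i hi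
  · have h2' : ((∑ i ∈ range k, stepT s j i : ℕ) : ℤ) = ((h : ℕ) : ℤ) := by
      push_cast
      rw [hsumZ]
      exact_mod_cast congrArg (Nat.cast : ℕ → ℤ) hsum
    exact_mod_cast h2'
  · unfold Sw
    simp only [key, mul_add, Finset.sum_add_distrib]
    have e1 : ∑ i ∈ range k, (i : ℤ) * (if i = j then (-1:ℤ) else 0)
        = ∑ i ∈ range k, (if i = j then -(i:ℤ) else 0) := by
      apply Finset.sum_congr rfl; intro i _; split <;> ring
    have e2 : ∑ i ∈ range k, (i : ℤ) * (if i = j + 1 then (1:ℤ) else 0)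
        = ∑ i ∈ range k, (if i = j + 1 then (i:ℤ) else 0) := by
      apply Finset.sum_congr rfl; intro i _; split <;> ring
    rw [e1, e2, sum_ind k j (by omega) (fun i => -(i:ℤ)), sum_ind k (j+1) hj (fun i => (i:ℤ))]
    push_cast; ring
  · unfold aSum
    simp only [key, add_mul, Finset.sum_add_distrib]
    have e1 : ∑ i ∈ range k, (if i = j then (-1:ℤ) else 0) * a i
        = ∑ i ∈ range k, (if i = j then -(a i) else 0) := by
      apply Finset.sum_congr rfl; intro i _; split <;> ring
    have e2 : ∑ i ∈ range k, (if i = j + 1 then (1:ℤ) else 0) * a i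
        = ∑ i ∈ range k, (if i = j + 1 then a i else 0) := by
      apply Finset.sum_congr rfl; intro i _; split <;> ring
    rw [e1, e2, sum_ind k j (by omega) (fun i => -(a i)), sum_ind k (j+1) hj a]
    ring

lemma abel (k : ℕ) (x : ℕ → ℕ) :
    Sw k x = ∑ t ∈ Icc 1 (k-1), ∑ j ∈ Ico t k, (x j : ℤ) := by
  induction k with
  | zero => simp [Sw]
  | succ k ih =>
    rw [Sw, Finset.sum_range_succ, ← Sw, ih]
    have hk1 : (k + 1) - 1 = k := rfl
    rw [hk1]
    have h1 : ∀ t ∈ Icc 1 k, ∑ j ∈ Ico t (k+1), (x j:ℤ) = (∑ j ∈ Ico t k, (x j:ℤ)) + x k := by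
      intro t ht
      simp only [mem_Icc] at ht
      rw [Finset.sum_Ico_succ_top ht.2]
    rw [Finset.sum_congr rfl h1, Finset.sum_add_distrib, Finset.sum_const, Nat.card_Icc]
    rcases Nat.eq_zero_or_pos k with hk | hk
    · subst hk; simp
    · obtain ⟨k', rfl⟩ : ∃ k', k = k' + 1 := ⟨k - 1, by omega⟩
      rw [Finset.sum_Icc_succ_top (by omega : 1 ≤ k' + 1)]
      simp [Nat.add_sub_cancel]

lemma lt_of_consec (f : ℕ → ℤ) (n : ℕ) (hc : ∀ i < n, f i < f (i+1)) :
    ∀ i j, i < j → j ≤ n → f i < f j := by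
  intro i j
  induction j with
  | zero => omega
  | succ j ih =>
    intro hij hjn
    rcases Nat.lt_or_ge i j with hij' | hij'
    · exact lt_trans (ih hij' (by omega)) (hc j (by omega))
    · have : i = j := by omega
      subst this
      exact hc i (by omega)

lemma chain_up (k h : ℕ) (r : ℕ → ℕ) (a : ℕ → ℤ) (W : ℤ)
    (hstep : ∀ s, InR k r h s → Sw k s < W →
      ∃ s', InR k r h s' ∧ Sw k s' = Sw k s + 1 ∧ aSum k a s < aSum k a s')
    (P0 : ℕ → ℕ) (hP0 : InR k r h P0) :
    ∀ n : ℕ, Sw k P0 + n ≤ W → ∃ P : ℕ → ℕ → ℕ, P 0 = P0 ∧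
      (∀ i ≤ n, InR k r h (P i) ∧ Sw k (P i) = Sw k P0 + i) ∧
      (∀ i < n, aSum k a (P i) < aSum k a (P (i+1))) := by
  intro n
  induction n with
  | zero =>
    intro _
    exact ⟨fun _ => P0, rfl, fun i hi => by simp [Nat.le_zero.mp hi, hP0], fun i hi => by omega⟩
  | succ n ih =>
    intro hn
    obtain ⟨P, hP1, hP2, hP3⟩ := ih (by push_cast at hn ⊢; omega)
    obtain ⟨hPn, hSwn⟩ := hP2 n le_rfl
    obtain ⟨s', hs1', hs2', hs3'⟩ := hstep (P n) hPn (by push_cast at hn; omega)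
    refine ⟨fun i => if i ≤ n then P i else s', by simp [hP1], ?_, ?_⟩
    · intro i hi
      by_cases hin : i ≤ n
      · simp only [if_pos hin]; exact hP2 i hin
      · have : i = n + 1 := by omega
        subst this
        simp only [if_neg hin]
        refine ⟨hs1', ?_⟩
        rw [hs2', hSwn]; push_cast; ring
    · intro i hi
      by_cases hin : i < n
      · simp only [if_pos (by omega : i ≤ n), if_pos (by omega : i + 1 ≤ n)]
        exact hP3 i hin
      · have hin' : i = n := by omega
        simp only [if_pos (by omega : i ≤ n), if_neg (by omega : ¬ i + 1 ≤ n)]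
        rw [hin']
        exact hs3'

lemma chain_down (k h : ℕ) (r : ℕ → ℕ) (a : ℕ → ℤ) (W : ℤ)
    (hstep : ∀ s, InR k r h s → W < Sw k s →
      ∃ s', InR k r h s' ∧ Sw k s' = Sw k s - 1 ∧ aSum k a s' < aSum k a s)
    (P0 : ℕ → ℕ) (hP0 : InR k r h P0) :
    ∀ n : ℕ, W ≤ Sw k P0 - n → ∃ P : ℕ → ℕ → ℕ, P 0 = P0 ∧
      (∀ i ≤ n, InR k r h (P i) ∧ Sw k (P i) = Sw k P0 - i) ∧
      (∀ i < n, aSum k a (P (i+1)) < aSum k a (P i)) := by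
  intro n
  induction n with
  | zero =>
    intro _
    exact ⟨fun _ => P0, rfl, fun i hi => by simp [Nat.le_zero.mp hi, hP0], fun i hi => by omega⟩
  | succ n ih =>
    intro hn
    obtain ⟨P, hP1, hP2, hP3⟩ := ih (by push_cast at hn ⊢; omega)
    obtain ⟨hPn, hSwn⟩ := hP2 n le_rfl
    obtain ⟨s', hs1', hs2', hs3'⟩ := hstep (P n) hPn (by push_cast at hn; omega)
    refine ⟨fun i => if i ≤ n then P i else s', by simp [hP1], ?_, ?_⟩
    · intro i hi
      by_cases hin : i ≤ n
      · simp only [if_pos hin]; exact hP2 i hin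
      · have : i = n + 1 := by omega
        subst this
        simp only [if_neg hin]
        refine ⟨hs1', ?_⟩
        rw [hs2', hSwn]; push_cast; ring
    · intro i hi
      by_cases hin : i < n
      · simp only [if_pos (by omega : i ≤ n), if_pos (by omega : i + 1 ≤ n)]
        exact hP3 i hin
      · have hin' : i = n := by omega
        simp only [if_pos (by omega : i ≤ n), if_neg (by omega : ¬ i + 1 ≤ n)]
        rw [hin']
        exact hs3'


def tupD (s : ℕ → ℕ) (j : ℕ) : ℕ → ℕ :=
  fun i => if i = j then s j + 1 else if i = j + 1 then s (j+1) - 1 else s i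

lemma tupD_props (k h : ℕ) (r : ℕ → ℕ) (a : ℕ → ℤ) (s : ℕ → ℕ) (j : ℕ)
    (hs : InR k r h s) (hj : j + 1 < k) (h1 : 1 ≤ s (j+1)) (h2 : s j < r j) :
    InR k r h (tupD s j) ∧ Sw k (tupD s j) = Sw k s - 1 ∧
      aSum k a (tupD s j) = aSum k a s - (a (j+1) - a j) := by
  obtain ⟨hc, hz, hsum⟩ := hs
  have hne : j ≠ j + 1 := by omega
  have key : ∀ i, ((tupD s j) i : ℤ) =
      (s i : ℤ) + (if i = j then (1 : ℤ) else 0) + (if i = j + 1 then (-1 : ℤ) else 0) := by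
    intro i
    unfold tupD
    by_cases hij : i = j
    · subst hij; rw [if_pos rfl, if_pos rfl, if_neg hne]; push_cast; ring
    · by_cases hij1 : i = j + 1
      · subst hij1; rw [if_neg hij, if_neg hij, if_pos rfl, if_pos rfl]; push_cast [h1]; ring
      · rw [if_neg hij, if_neg hij, if_neg hij1, if_neg hij1]; ring
  have hsumZ : ∑ i ∈ range k, ((tupD s j) i : ℤ) = ∑ i ∈ range k, (s i : ℤ) := by
    simp only [key, Finset.sum_add_distrib]
    rw [sum_ind k j (by omega) (fun _ => (1 : ℤ)), sum_ind k (j+1) hj (fun _ => (-1 : ℤ))]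
    ring
  have hDR : InR k r h (tupD s j) := by
    refine ⟨?_, ?_, ?_⟩
    · intro i hi
      unfold tupD
      by_cases hij : i = j
      · subst hij; rw [if_pos rfl]; omega
      · by_cases hij1 : i = j + 1
        · subst hij1; rw [if_neg hij, if_pos rfl]
          exact le_trans (Nat.sub_le _ _) (hc _ hi)
        · rw [if_neg hij, if_neg hij1]; exact hc _ hi
    · intro i hi
      unfold tupD
      rw [if_neg (by omega), if_neg (by omega)]
      exact hz i hi
    · have h2' : ((∑ i ∈ range k, tupD s j i : ℕ) : ℤ) = ((h : ℕ) : ℤ) := by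
        push_cast
        rw [hsumZ]
        exact_mod_cast congrArg (Nat.cast : ℕ → ℤ) hsum
      exact_mod_cast h2'
  have heq : stepT (tupD s j) j = s := by
    funext i
    unfold stepT tupD
    by_cases hij : i = j
    · subst hij; rw [if_pos rfl, if_pos rfl]; omega
    · by_cases hij1 : i = j + 1
      · subst hij1
        rw [if_neg hij, if_pos rfl, if_neg hij, if_pos rfl]
        omega
      · rw [if_neg hij, if_neg hij1, if_neg hij, if_neg hij1]
  have hD1 : 1 ≤ tupD s j j := by unfold tupD; rw [if_pos rfl]; omega
  have hD2 : tupD s j (j+1) < r (j+1) := by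
    unfold tupD
    rw [if_neg (by omega), if_pos rfl]
    have := hc (j+1) hj
    omega
  obtain ⟨_, hSw, haS⟩ := step_props k h r a (tupD s j) j hDR hj hD1 hD2
  rw [heq] at hSw haS
  exact ⟨hDR, by linarith, by linarith⟩

def sminT (I δ : ℕ) (r : ℕ → ℕ) : ℕ → ℕ :=
  fun j => if j < I then r j else if j = I then δ else 0
def smaxT (k M θ : ℕ) (r : ℕ → ℕ) : ℕ → ℕ :=
  fun j => if j = M then θ else if M < j ∧ j < k then r j else 0

section ctx
variable (k h I M δ θ : ℕ) (r : ℕ → ℕ)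

lemma smin_sum (hIk : I < k) :
    ∑ j ∈ range k, sminT I δ r j = (∑ j ∈ range I, r j) + δ := by
  rw [← Finset.sum_range_add_sum_Ico _ (le_of_lt hIk)]
  congr 1
  · apply Finset.sum_congr rfl
    intro j hj
    simp only [mem_range] at hj
    simp [sminT, hj]
  · rw [Finset.sum_eq_single_of_mem I (by simp [mem_Ico]; omega)]
    · simp [sminT]
    · intro j hj hne
      simp only [mem_Ico] at hj
      simp [sminT, hne]
      omega

lemma smin_mem (hIk : I < k) (hδr : δ ≤ r I) (hsum : (∑ j ∈ range I, r j) + δ = h) :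
    InR k r h (sminT I δ r) := by
  refine ⟨?_, ?_, by rw [smin_sum k I δ r hIk, hsum]⟩
  · intro i _
    unfold sminT
    by_cases h1 : i < I
    · simp [h1]
    · by_cases h2 : i = I
      · subst h2; simp [h1, hδr]
      · simp [h1, h2]
  · intro i hi
    unfold sminT
    rw [if_neg (by omega), if_neg (by omega)]

lemma smin_Sw (hIk : I < k) :
    Sw k (sminT I δ r) = (∑ j ∈ range I, (j : ℤ) * r j) + I * δ := by
  unfold Sw
  rw [← Finset.sum_range_add_sum_Ico _ (le_of_lt hIk)]
  congr 1
  · apply Finset.sum_congr rfl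
    intro j hj
    simp only [mem_range] at hj
    simp [sminT, hj]
  · rw [Finset.sum_eq_single_of_mem I (by simp [mem_Ico]; omega)]
    · simp [sminT]
    · intro j hj hne
      simp only [mem_Ico] at hj
      simp [sminT, hne]
      omega

lemma smax_sum (hMk : M < k) :
    ∑ j ∈ range k, smaxT k M θ r j = θ + ∑ j ∈ Ico (M+1) k, r j := by
  rw [← Finset.sum_range_add_sum_Ico _ (by omega : M + 1 ≤ k), Finset.sum_range_succ]
  have h0 : ∑ j ∈ range M, smaxT k M θ r j = 0 := by
    apply Finset.sum_eq_zero
    intro j hj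
    simp only [mem_range] at hj
    unfold smaxT
    rw [if_neg (by omega), if_neg (by push_neg; omega)]
  have h1 : smaxT k M θ r M = θ := by simp [smaxT]
  have h2 : ∑ j ∈ Ico (M+1) k, smaxT k M θ r j = ∑ j ∈ Ico (M+1) k, r j := by
    apply Finset.sum_congr rfl
    intro j hj
    simp only [mem_Ico] at hj
    unfold smaxT
    rw [if_neg (by omega), if_pos (by omega)]
  rw [h0, h1, h2]
  omega

lemma smax_mem (hMk : M < k) (hθr : θ ≤ r M) (hsum : θ + ∑ j ∈ Ico (M+1) k, r j = h) :
    InR k r h (smaxT k M θ r) := by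
  refine ⟨?_, ?_, by rw [smax_sum k M θ r hMk, hsum]⟩
  · intro i hi
    unfold smaxT
    by_cases h1 : i = M
    · subst h1; simp [hθr]
    · by_cases h2 : M < i ∧ i < k
      · simp [h1, h2]
      · simp [h1, h2]
  · intro i hi
    unfold smaxT
    rw [if_neg (by omega), if_neg (by push_neg; omega)]

lemma smax_Sw (hMk : M < k) :
    Sw k (smaxT k M θ r) = (∑ j ∈ Ico (M+1) k, (j : ℤ) * r j) + M * θ := by
  unfold Sw
  rw [← Finset.sum_range_add_sum_Ico _ (by omega : M + 1 ≤ k), Finset.sum_range_succ]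
  have h0 : ∑ j ∈ range M, (j : ℤ) * smaxT k M θ r j = 0 := by
    apply Finset.sum_eq_zero
    intro j hj
    simp only [mem_range] at hj
    have : smaxT k M θ r j = 0 := by
      unfold smaxT; rw [if_neg (by omega), if_neg (by push_neg; omega)]
    rw [this]; ring
  have h1 : smaxT k M θ r M = θ := by simp [smaxT]
  have h2 : ∑ j ∈ Ico (M+1) k, (j : ℤ) * smaxT k M θ r j
      = ∑ j ∈ Ico (M+1) k, (j : ℤ) * r j := by
    apply Finset.sum_congr rfl
    intro j hj
    simp only [mem_Ico] at hj
    have : smaxT k M θ r j = r j := by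
      unfold smaxT; rw [if_neg (by omega), if_pos (by omega)]
    rw [this]
  rw [h0, h1, h2]
  ring

end ctx

section ctx2
variable (k h I M δ θ : ℕ) (r : ℕ → ℕ)

lemma Sw_ge (hIk : I < k) (hδr : δ ≤ r I) (hsum : (∑ j ∈ range I, r j) + δ = h)
    (s : ℕ → ℕ) (hs : InR k r h s) : Sw k (sminT I δ r) ≤ Sw k s := by
  obtain ⟨hc, hz, hst⟩ := hs
  rw [abel, abel]
  apply Finset.sum_le_sum
  intro t ht
  simp only [mem_Icc] at ht
  have htk : t < k := by omega
  have hmins := smin_mem k h I δ r hIk hδr hsum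
  obtain ⟨mc, mz, mst⟩ := hmins
  -- reduce to prefix comparison in ℕ
  have e1 : ∑ j ∈ range t, s j + ∑ j ∈ Ico t k, s j = h := by
    rw [Finset.sum_range_add_sum_Ico _ (le_of_lt htk)]; exact hst
  have e2 : ∑ j ∈ range t, sminT I δ r j + ∑ j ∈ Ico t k, sminT I δ r j = h := by
    rw [Finset.sum_range_add_sum_Ico _ (le_of_lt htk)]; exact mst
  have hpre : ∑ j ∈ range t, s j ≤ ∑ j ∈ range t, sminT I δ r j := by
    rcases le_or_gt t I with hti | hti
    · have hr1 : ∑ j ∈ range t, sminT I δ r j = ∑ j ∈ range t, r j := by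
        apply Finset.sum_congr rfl
        intro j hj
        simp only [mem_range] at hj
        simp [sminT, (by omega : j < I)]
      rw [hr1]
      exact Finset.sum_le_sum (fun j hj => hc j (by simp at hj; omega))
    · have hr2 : ∑ j ∈ range t, sminT I δ r j = h := by
        rw [smin_sum t I δ r hti, hsum]
      rw [hr2, ← hst]
      exact Finset.sum_le_sum_of_subset (Finset.range_subset_range.mpr (le_of_lt htk))
  have : ∑ j ∈ Ico t k, sminT I δ r j ≤ ∑ j ∈ Ico t k, s j := by omega
  exact_mod_cast this

lemma Sw_le (hMk : M < k) (hθr : θ ≤ r M) (hsum : θ + ∑ j ∈ Ico (M+1) k, r j = h)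
    (s : ℕ → ℕ) (hs : InR k r h s) : Sw k s ≤ Sw k (smaxT k M θ r) := by
  obtain ⟨hc, hz, hst⟩ := hs
  rw [abel, abel]
  apply Finset.sum_le_sum
  intro t ht
  simp only [mem_Icc] at ht
  have htk : t < k := by omega
  have htail : ∑ j ∈ Ico t k, s j ≤ ∑ j ∈ Ico t k, smaxT k M θ r j := by
    rcases le_or_gt t M with htm | htm
    · -- tail of smax is h
      have h0 : ∑ j ∈ range t, smaxT k M θ r j = 0 := by
        apply Finset.sum_eq_zero
        intro j hj
        simp only [mem_range] at hj
        unfold smaxT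
        rw [if_neg (by omega), if_neg (by push_neg; omega)]
      have e2 : ∑ j ∈ range t, smaxT k M θ r j + ∑ j ∈ Ico t k, smaxT k M θ r j
          = θ + ∑ j ∈ Ico (M+1) k, r j := by
        rw [Finset.sum_range_add_sum_Ico _ (le_of_lt htk)]
        exact smax_sum k M θ r hMk
      have e3 : ∑ j ∈ Ico t k, smaxT k M θ r j = h := by omega
      rw [e3, ← hst]
      exact Finset.sum_le_sum_of_subset (by intro x hx; simp at hx ⊢; omega)
    · apply Finset.sum_le_sum
      intro j hj
      simp only [mem_Ico] at hj
      have : smaxT k M θ r j = r j := by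
        unfold smaxT; rw [if_neg (by omega), if_pos (by omega)]
      rw [this]
      exact hc j hj.2
  exact_mod_cast htail

end ctx2

section ctx3
variable (k h I M δ θ : ℕ) (r : ℕ → ℕ)

/-- If `Sw s < Sw smax` then an upward step is possible. -/
lemma exists_up (hk : 1 ≤ k) (hr : ∀ j < k, 0 < r j)
    (hMk : M < k) (hθr : θ ≤ r M) (hsum : θ + ∑ j ∈ Ico (M+1) k, r j = h)
    (s : ℕ → ℕ) (hs : InR k r h s) (hlt : Sw k s < Sw k (smaxT k M θ r)) :
    ∃ j, j + 1 < k ∧ 1 ≤ s j ∧ s (j+1) < r (j+1) := by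
  by_contra hcon
  push_neg at hcon
  -- hcon : ∀ j, j + 1 < k → 1 ≤ s j → r (j+1) ≤ s (j+1)
  obtain ⟨hc, hz, hst⟩ := hs
  have H : ∀ j, j + 1 < k → s j ≠ 0 → s (j+1) = r (j+1) := by
    intro j hj hj0
    have := hcon j hj (by omega)
    have := hc (j+1) hj
    omega
  -- show Sw smax ≤ Sw s, contradiction
  have : Sw k (smaxT k M θ r) ≤ Sw k s := by
    rw [abel, abel]
    apply Finset.sum_le_sum
    intro t ht
    simp only [mem_Icc] at ht
    have htk : t < k := by omega
    have key : ∑ j ∈ Ico t k, smaxT k M θ r j ≤ ∑ j ∈ Ico t k, s j := by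
      by_cases hcase : ∀ j < t, s j = 0
      · -- tail of s is h
        have e1 : ∑ j ∈ range t, s j = 0 := Finset.sum_eq_zero (fun j hj => hcase j (by simpa using hj))
        have e2 : ∑ j ∈ range t, s j + ∑ j ∈ Ico t k, s j = h := by
          rw [Finset.sum_range_add_sum_Ico _ (le_of_lt htk)]; exact hst
        have e3 : ∑ j ∈ Ico t k, s j = h := by omega
        rw [e3]
        -- tail of smax at most total = h
        have := smax_mem k h M θ r hMk hθr hsum
        obtain ⟨_, _, mst⟩ := this
        rw [← mst]
        exact Finset.sum_le_sum_of_subset (by intro x hx; simp at hx ⊢; omega)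
      · push_neg at hcase
        obtain ⟨j0, hj0t, hj0⟩ := hcase
        -- all coordinates above j0 are full
        have asc : ∀ n, 1 ≤ n → j0 + n < k → s (j0 + n) = r (j0 + n) := by
          intro n
          induction n with
          | zero => omega
          | succ n ihn =>
            intro _ hnk
            rcases Nat.eq_zero_or_pos n with hn0 | hn0
            · subst hn0
              exact H j0 (by omega) hj0
            · have hprev : s (j0 + n) = r (j0 + n) := ihn hn0 (by omega)
              have hpos : 0 < r (j0 + n) := hr _ (by omega)
              have := H (j0 + n) (by omega) (by omega)
              exact this
        have efull : ∀ j, t ≤ j → j < k → s j = r j := by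
          intro j hjt hjk
          have : j = j0 + (j - j0) := by omega
          rw [this]
          exact asc (j - j0) (by omega) (by omega)
        calc ∑ j ∈ Ico t k, smaxT k M θ r j ≤ ∑ j ∈ Ico t k, r j := by
              apply Finset.sum_le_sum
              intro j hj
              simp only [mem_Ico] at hj
              unfold smaxT
              by_cases h1 : j = M
              · subst h1; rw [if_pos rfl]; exact hθr
              · rw [if_neg h1]
                by_cases h2 : M < j ∧ j < k
                · rw [if_pos h2]
                · rw [if_neg h2]; exact Nat.zero_le _
          _ = ∑ j ∈ Ico t k, s j := by
              apply Finset.sum_congr rfl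
              intro j hj
              simp only [mem_Ico] at hj
              exact (efull j hj.1 hj.2).symm
    exact_mod_cast key
  omega

/-- If `Sw smin < Sw s` then a downward step is possible. -/
lemma exists_down (hk : 1 ≤ k) (hr : ∀ j < k, 0 < r j)
    (hIk : I < k) (hδr : δ ≤ r I) (hsum : (∑ j ∈ range I, r j) + δ = h)
    (s : ℕ → ℕ) (hs : InR k r h s) (hgt : Sw k (sminT I δ r) < Sw k s) :
    ∃ j, j + 1 < k ∧ 1 ≤ s (j+1) ∧ s j < r j := by
  by_contra hcon
  push_neg at hcon
  obtain ⟨hc, hz, hst⟩ := hs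
  have H : ∀ j, j + 1 < k → s (j+1) ≠ 0 → s j = r j := by
    intro j hj hj0
    have := hcon j hj (by omega)
    have := hc j (by omega)
    omega
  have : Sw k s ≤ Sw k (sminT I δ r) := by
    rw [abel, abel]
    apply Finset.sum_le_sum
    intro t ht
    simp only [mem_Icc] at ht
    have htk : t < k := by omega
    have hmins := smin_mem k h I δ r hIk hδr hsum
    obtain ⟨mc, mz, mst⟩ := hmins
    have e1 : ∑ j ∈ range t, s j + ∑ j ∈ Ico t k, s j = h := by
      rw [Finset.sum_range_add_sum_Ico _ (le_of_lt htk)]; exact hst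
    have e2 : ∑ j ∈ range t, sminT I δ r j + ∑ j ∈ Ico t k, sminT I δ r j = h := by
      rw [Finset.sum_range_add_sum_Ico _ (le_of_lt htk)]; exact mst
    -- prefix of smin is at most prefix of s
    have hpre : ∑ j ∈ range t, sminT I δ r j ≤ ∑ j ∈ range t, s j := by
      by_cases hcase : ∀ i, t ≤ i → i < k → s i = 0
      · -- prefix of s is h
        have z1 : ∑ j ∈ Ico t k, s j = 0 :=
          Finset.sum_eq_zero (fun j hj => by simp only [mem_Ico] at hj; exact hcase j hj.1 hj.2)
        have z2 : ∑ j ∈ range t, sminT I δ r j ≤ h := by omega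
        omega
      · push_neg at hcase
        obtain ⟨i0, hi0t, hi0k, hi0⟩ := hcase
        -- all coordinates below i0 are full
        have aux : ∀ n, n ≤ i0 → 1 ≤ s (i0 - n) := by
          intro n
          induction n with
          | zero => intro _; simpa using Nat.one_le_iff_ne_zero.mpr hi0
          | succ n ihn =>
            intro hn
            have h1 : 1 ≤ s (i0 - n) := ihn (by omega)
            have hj : (i0 - (n+1)) + 1 = i0 - n := by omega
            have h2 := H (i0 - (n+1)) (by omega) (by rw [hj]; omega)
            have h3 : 0 < r (i0 - (n+1)) := hr _ (by omega)
            omega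
        have hfull : ∀ j, j < t → s j = r j := by
          intro j hjt
          have hjk : j + 1 < k := by omega
          have hji : j + 1 ≤ i0 := by omega
          have heq : i0 - (i0 - (j+1)) = j + 1 := by omega
          have h1 : 1 ≤ s (j+1) := by
            have h2 := aux (i0 - (j+1)) (by omega)
            rwa [heq] at h2
          exact H j hjk (by omega)
        calc ∑ j ∈ range t, sminT I δ r j ≤ ∑ j ∈ range t, r j := by
              apply Finset.sum_le_sum
              intro j hj
              unfold sminT
              by_cases h1 : j < I
              · rw [if_pos h1]
              · rw [if_neg h1]
                by_cases h2 : j = I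
                · rw [if_pos h2, h2]; exact hδr
                · rw [if_neg h2]; exact Nat.zero_le _
          _ = ∑ j ∈ range t, s j := by
              apply Finset.sum_congr rfl
              intro j hj
              simp only [mem_range] at hj
              exact (hfull j hj).symm
    have key : ∑ j ∈ Ico t k, s j ≤ ∑ j ∈ Ico t k, sminT I δ r j := by omega
    exact_mod_cast key
  omega

end ctx3


def capT (r : ℕ → ℕ) (j j' : ℕ) : ℕ → ℕ := fun i =>
  r i - (if i = j then 1 else 0) - (if i = j+1 then 1 else 0)
    - (if i = j' then 1 else 0) - (if i = j'+1 then 1 else 0)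

def tupY (x : ℕ → ℕ) (p q : ℕ) : ℕ → ℕ := fun i =>
  x i + (if i = p then 1 else 0) + (if i = q then 1 else 0)

section ctx4
variable (k h : ℕ) (r : ℕ → ℕ) (a : ℕ → ℤ)


lemma sum_indn (k j : ℕ) (hj : j < k) :
    ∑ i ∈ range k, (if i = j then (1:ℕ) else 0) = 1 := by
  rw [Finset.sum_ite_eq' (range k) j (fun _ => (1:ℕ))]
  simp [hj]

lemma sum_indi (k jj : ℕ) (hjj : jj < k) :
    ∑ i ∈ range k, (i:ℤ) * (if i = jj then (1:ℤ) else 0) = jj := by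
  have e : ∀ i : ℕ, (i:ℤ) * (if i = jj then (1:ℤ) else 0) = (if i = jj then (i:ℤ) else 0) := by
    intro i; split_ifs <;> ring
  rw [Finset.sum_congr rfl (fun i _ => e i), Finset.sum_ite_eq' (range k) jj (fun i => (i:ℤ))]
  simp [hjj]

lemma sum_inda (k jj : ℕ) (hjj : jj < k) :
    ∑ i ∈ range k, (if i = jj then (1:ℤ) else 0) * a i = a jj := by
  have e : ∀ i, (if i = jj then (1:ℤ) else 0) * a i = (if i = jj then a i else 0) := by
    intro i; split_ifs <;> ring
  rw [Finset.sum_congr rfl (fun i _ => e i), Finset.sum_ite_eq' (range k) jj a]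
  simp [hjj]

lemma tupY_mem (hr : ∀ i < k, 0 < r i) (x : ℕ → ℕ) (j j' p q : ℕ) (hx1 : ∀ i, x i ≤ capT r j j' i)
    (hx2 : ∀ i, k ≤ i → x i = 0) (hx3 : ∑ i ∈ range k, x i = h - 2)
    (hh2 : 2 ≤ h) (hpk : p < k) (hqk : q < k) (hpq : p ≠ q)
    (hp : p = j ∨ p = j + 1 ∨ p = j' ∨ p = j' + 1)
    (hq : q = j ∨ q = j + 1 ∨ q = j' ∨ q = j' + 1) :
    InR k r h (tupY x p q) := by
  refine ⟨?_, ?_, ?_⟩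
  · intro i hi
    have h1 := hx1 i
    have hri := hr i hi
    unfold capT at h1
    unfold tupY
    beta_reduce
    rcases hp with rfl | rfl | rfl | rfl <;> rcases hq with rfl | rfl | rfl | rfl <;>
      split_ifs at h1 ⊢ <;> omega
  · intro i hi
    unfold tupY
    beta_reduce
    rw [hx2 i hi, if_neg (by omega), if_neg (by omega)]
  · unfold tupY
    beta_reduce
    simp only [Finset.sum_add_distrib]
    rw [hx3, sum_indn k p hpk, sum_indn k q hqk]
    omega

lemma tupY_Sw (x : ℕ → ℕ) (p q : ℕ) (hpk : p < k) (hqk : q < k) :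
    Sw k (tupY x p q) = Sw k x + p + q := by
  unfold Sw tupY
  beta_reduce
  have e : ∀ i : ℕ, ((x i + (if i = p then 1 else 0) + (if i = q then 1 else 0) : ℕ) : ℤ)
      = (x i : ℤ) + (if i = p then (1:ℤ) else 0) + (if i = q then (1:ℤ) else 0) := by
    intro i; split_ifs <;> push_cast <;> ring
  simp only [e, mul_add, Finset.sum_add_distrib]
  rw [sum_indi k p hpk, sum_indi k q hqk]

lemma tupY_aSum (x : ℕ → ℕ) (p q : ℕ) (hpk : p < k) (hqk : q < k) :
    aSum k a (tupY x p q) = aSum k a x + a p + a q := by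
  unfold aSum tupY
  beta_reduce
  have e : ∀ i : ℕ, ((x i + (if i = p then 1 else 0) + (if i = q then 1 else 0) : ℕ) : ℤ)
      = (x i : ℤ) + (if i = p then (1:ℤ) else 0) + (if i = q then (1:ℤ) else 0) := by
    intro i; split_ifs <;> push_cast <;> ring
  simp only [e, add_mul, Finset.sum_add_distrib]
  rw [sum_inda a k p hpk, sum_inda a k q hqk]

lemma gaps_eq (hr : ∀ j < k, 0 < r j) (hh2 : 2 ≤ h) (hhk : h + 2 ≤ ∑ j ∈ range k, r j)
    (j j' : ℕ) (hjj' : j + 1 < j') (hj'k : j' + 1 < k)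
    (hdet : ∀ x y, InR k r h x → InR k r h y → Sw k x = Sw k y → aSum k a x = aSum k a y) :
    a (j+1) - a j = a (j'+1) - a j' := by
  have hcsum : ∑ i ∈ range k, capT r j j' i + 4 = ∑ i ∈ range k, r i := by
    have key : ∀ i ∈ range k, capT r j j' i + ((if i = j then 1 else 0)
        + (if i = j+1 then 1 else 0)
        + (if i = j' then 1 else 0) + (if i = j'+1 then 1 else 0)) = r i := by
      intro i hi
      simp only [mem_range] at hi
      have := hr i hi
      unfold capT
      split_ifs <;> omega
    calc ∑ i ∈ range k, capT r j j' i + 4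
        = ∑ i ∈ range k, capT r j j' i + ((∑ i ∈ range k, (if i = j then (1:ℕ) else 0))
          + (∑ i ∈ range k, (if i = j+1 then (1:ℕ) else 0))
          + (∑ i ∈ range k, (if i = j' then (1:ℕ) else 0))
          + (∑ i ∈ range k, (if i = j'+1 then (1:ℕ) else 0))) := by
          rw [sum_indn k j (by omega), sum_indn k (j+1) (by omega), sum_indn k j' (by omega),
            sum_indn k (j'+1) (by omega)]
      _ = ∑ i ∈ range k, (capT r j j' i + ((if i = j then 1 else 0)
          + (if i = j+1 then 1 else 0)
          + (if i = j' then 1 else 0) + (if i = j'+1 then 1 else 0))) := by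
          simp only [Finset.sum_add_distrib]
      _ = ∑ i ∈ range k, r i := Finset.sum_congr rfl key
  obtain ⟨x, hx1, hx2, hx3⟩ := exists_dist k (h - 2) (capT r j j') (by omega)
  have hyR : InR k r h (tupY x (j+1) j') :=
    tupY_mem k h r hr x j j' (j+1) j' hx1 hx2 hx3 hh2 (by omega) (by omega) (by omega)
      (Or.inr (Or.inl rfl)) (Or.inr (Or.inr (Or.inl rfl)))
  have hzR : InR k r h (tupY x j (j'+1)) :=
    tupY_mem k h r hr x j j' j (j'+1) hx1 hx2 hx3 hh2 (by omega) (by omega) (by omega)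
      (Or.inl rfl) (Or.inr (Or.inr (Or.inr rfl)))
  have hSw : Sw k (tupY x (j+1) j') = Sw k (tupY x j (j'+1)) := by
    rw [tupY_Sw k x (j+1) j' (by omega) (by omega), tupY_Sw k x j (j'+1) (by omega) (by omega)]
    push_cast
    ring
  have haS := hdet _ _ hyR hzR hSw
  rw [tupY_aSum k a x (j+1) j' (by omega) (by omega),
    tupY_aSum k a x j (j'+1) (by omega) (by omega)] at haS
  linarith

end ctx4

def truncT (k : ℕ) (s : ℕ → ℕ) : ℕ → ℕ := fun i => if i < k then s i else 0

lemma truncT_lt (k : ℕ) (s : ℕ → ℕ) {i : ℕ} (hi : i < k) : truncT k s i = s i := if_pos hi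

lemma truncT_ge (k : ℕ) (s : ℕ → ℕ) {i : ℕ} (hi : ¬ i < k) : truncT k s i = 0 := if_neg hi

def glue (i0 : ℕ) (D U : ℕ → ℕ → ℕ) : ℕ → (ℕ → ℕ) :=
  fun n => if n ≤ i0 then D (i0 - n) else U (n - i0)

lemma glue_le (i0 : ℕ) (D U : ℕ → ℕ → ℕ) {n : ℕ} (h : n ≤ i0) :
    glue i0 D U n = D (i0 - n) := if_pos h

lemma glue_gt (i0 : ℕ) (D U : ℕ → ℕ → ℕ) {n : ℕ} (h : ¬ n ≤ i0) :
    glue i0 D U n = U (n - i0) := if_neg h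

theorem general_hfold_eq_iff_AP (k h I M δ θ : ℕ) (a : ℕ → ℤ) (r : ℕ → ℕ)
    (hk5 : 5 ≤ k)
    (ha : ∀ i j, i < j → j < k → a i < a j)
    (hr : ∀ j < k, 0 < r j)
    (hh2 : 2 ≤ h) (hhk : h + 2 ≤ ∑ j ∈ Finset.range k, r j)
    (hIk : I ≤ k)
    (hI1 : ∑ j ∈ Finset.range I, r j ≤ h)
    (hI2 : ∀ I' ≤ k, (∑ j ∈ Finset.range I', r j ≤ h) → I' ≤ I)
    (hM1 : ∑ j ∈ Finset.Ico (M + 1) k, r j ≤ h)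
    (hM2 : ∀ M', (∑ j ∈ Finset.Ico (M' + 1) k, r j ≤ h) → M ≤ M')
    (hδ : (δ : ℤ) = (h : ℤ) - ∑ j ∈ Finset.range I, (r j : ℤ))
    (hθ : (θ : ℤ) = (h : ℤ) - ∑ j ∈ Finset.Ico (M + 1) k, (r j : ℤ)) :
    ((genSumset k a r h).ncard : ℤ) = Lval k I M r δ θ ↔
      ∃ d : ℤ, 0 < d ∧ ∀ i < k, a i = a 0 + (i : ℤ) * d := by
  -- basic context facts
  have hIk' : I < k := by
    rcases lt_or_eq_of_le hIk with h' | h'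
    · exact h'
    · exfalso; rw [h'] at hI1; omega
  have hsumI : (∑ j ∈ range I, r j) + δ = h := by
    have e : ((∑ j ∈ range I, r j : ℕ) : ℤ) = ∑ j ∈ range I, (r j : ℤ) := by push_cast; rfl
    omega
  have hδr : δ ≤ r I := by
    have hnot : ¬ (∑ j ∈ range (I+1), r j ≤ h) := by
      intro hle
      have := hI2 (I+1) (by omega) hle
      omega
    rw [Finset.sum_range_succ] at hnot
    omega
  have hMk' : M < k := by
    have := hM2 (k-1) (by rw [show (k-1)+1 = k by omega]; simp)
    omega
  have hsumM : θ + ∑ j ∈ Ico (M+1) k, r j = h := by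
    have e : ((∑ j ∈ Ico (M+1) k, r j : ℕ) : ℤ) = ∑ j ∈ Ico (M+1) k, (r j : ℤ) := by
      push_cast; rfl
    omega
  have hθr : θ ≤ r M := by
    rcases Nat.eq_zero_or_pos M with hM0 | hM0
    · subst hM0
      have hsplit : ∑ j ∈ range k, r j = r 0 + ∑ j ∈ Ico 1 k, r j := by
        rw [Finset.range_eq_Ico, Finset.sum_eq_sum_Ico_succ_bot (by omega) r]
      have hsumM' : θ + ∑ j ∈ Ico 1 k, r j = h := by simpa using hsumM
      omega
    · have hnot : ¬ (∑ j ∈ Ico M k, r j ≤ h) := by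
        intro hle
        have := hM2 (M-1) (by rw [show (M-1)+1 = M by omega]; exact hle)
        omega
      rw [Finset.sum_eq_sum_Ico_succ_bot hMk' r] at hnot
      omega
  have hsminR : InR k r h (sminT I δ r) := smin_mem k h I δ r hIk' hδr hsumI
  have hsmaxR : InR k r h (smaxT k M θ r) := smax_mem k h M θ r hMk' hθr hsumM
  have hblo : ∀ s, InR k r h s → Sw k (sminT I δ r) ≤ Sw k s :=
    fun s hs => Sw_ge k h I δ r hIk' hδr hsumI s hs
  have hbhi : ∀ s, InR k r h s → Sw k s ≤ Sw k (smaxT k M θ r) :=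
    fun s hs => Sw_le k h M θ r hMk' hθr hsumM s hs
  have hmm : Sw k (sminT I δ r) ≤ Sw k (smaxT k M θ r) := hbhi _ hsminR
  have hLval : Lval k I M r δ θ = Sw k (smaxT k M θ r) - Sw k (sminT I δ r) + 1 := by
    rw [smin_Sw k I δ r hIk', smax_Sw k M θ r hMk']
    unfold Lval
    ring
  have hstepUp : ∀ s, InR k r h s → Sw k s < Sw k (smaxT k M θ r) →
      ∃ s', InR k r h s' ∧ Sw k s' = Sw k s + 1 ∧ aSum k a s < aSum k a s' := by
    intro s hs hlt
    obtain ⟨j, hj, h1, h2⟩ := exists_up k h M θ r (by omega) hr hMk' hθr hsumM s hs hlt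
    obtain ⟨hR, hSw, haS⟩ := step_props k h r a s j hs hj h1 h2
    have := ha j (j+1) (by omega) hj
    exact ⟨stepT s j, hR, hSw, by omega⟩
  have hstepDn : ∀ s, InR k r h s → Sw k (sminT I δ r) < Sw k s →
      ∃ s', InR k r h s' ∧ Sw k s' = Sw k s - 1 ∧ aSum k a s' < aSum k a s := by
    intro s hs hgt
    obtain ⟨j, hj, h1, h2⟩ := exists_down k h I δ r (by omega) hr hIk' hδr hsumI s hs hgt
    obtain ⟨hR, hSw, haS⟩ := tupD_props k h r a s j hs hj h1 h2
    have := ha j (j+1) (by omega) hj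
    exact ⟨tupD s j, hR, hSw, by omega⟩
  set nb : ℕ := (Sw k (smaxT k M θ r) - Sw k (sminT I δ r)).toNat with hnbdef
  have hnb : (nb : ℤ) = Sw k (smaxT k M θ r) - Sw k (sminT I δ r) :=
    Int.toNat_of_nonneg (by omega)
  constructor
  · -- forward: cardinality equality implies AP
    intro hcard
    have hfin : (genSumset k a r h).Finite := by
      by_contra hinf
      rw [Set.Infinite.ncard hinf] at hcard
      omega
    have hcardF : (hfin.toFinset).card = nb + 1 := by
      rw [Set.ncard_eq_toFinset_card _ hfin] at hcard
      omega
    have hmemF : ∀ s, InR k r h s → aSum k a s ∈ hfin.toFinset := by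
      intro s hs
      rw [Set.Finite.mem_toFinset]
      exact ⟨s, hs.1, hs.2.2, rfl⟩
    obtain ⟨P0, hP00, hP0mem, hP0inc⟩ := chain_up k h r a (Sw k (smaxT k M θ r)) hstepUp
      (sminT I δ r) hsminR nb (by omega)
    set f : Fin (nb + 1) → ℤ := fun i => aSum k a (P0 i.val) with hfdef
    have hfmono : StrictMono f := by
      intro i j hij
      exact lt_of_consec (fun n => aSum k a (P0 n)) nb hP0inc i.val j.val hij
        (Nat.lt_succ_iff.mp j.isLt)
    have hfs : ∀ x, f x ∈ hfin.toFinset :=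
      fun x => hmemF _ (hP0mem x.val (Nat.lt_succ_iff.mp x.isLt)).1
    have hfeq := Finset.orderEmbOfFin_unique hcardF hfs hfmono
    have hkey : ∀ s, InR k r h s → ∀ (hi : (Sw k s - Sw k (sminT I δ r)).toNat < nb + 1),
        aSum k a s = f ⟨(Sw k s - Sw k (sminT I δ r)).toNat, hi⟩ := by
      intro s hs hi
      set i0 : ℕ := (Sw k s - Sw k (sminT I δ r)).toNat with hi0def
      have hi0 : (i0 : ℤ) = Sw k s - Sw k (sminT I δ r) :=
        Int.toNat_of_nonneg (by have := hblo s hs; omega)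
      have hshi := hbhi s hs
      obtain ⟨D, hD0, hDmem, hDdec⟩ := chain_down k h r a (Sw k (sminT I δ r)) hstepDn
        s hs i0 (by omega)
      set n2 : ℕ := (Sw k (smaxT k M θ r) - Sw k s).toNat with hn2def
      have hn2 : (n2 : ℤ) = Sw k (smaxT k M θ r) - Sw k s :=
        Int.toNat_of_nonneg (by omega)
      obtain ⟨U, hU0, hUmem, hUinc⟩ := chain_up k h r a (Sw k (smaxT k M θ r)) hstepUp
        s hs n2 (by omega)
      have hsplit : i0 + n2 = nb := by omega
      have hgmem : ∀ n, n ≤ nb → InR k r h (glue i0 D U n) := by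
        intro n hn
        by_cases hcase : n ≤ i0
        · rw [glue_le i0 D U hcase]
          exact (hDmem (i0 - n) (by omega)).1
        · rw [glue_gt i0 D U hcase]
          exact (hUmem (n - i0) (by omega)).1
      have hgc : ∀ n, n < nb → aSum k a (glue i0 D U n) < aSum k a (glue i0 D U (n+1)) := by
        intro n hn
        rcases lt_trichotomy n i0 with h1 | h1 | h1
        · rw [glue_le i0 D U (by omega : n ≤ i0), glue_le i0 D U (by omega : n + 1 ≤ i0)]
          have e1 : i0 - n - 1 + 1 = i0 - n := by omega
          have := hDdec (i0 - n - 1) (by omega)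
          rw [e1] at this
          rw [show i0 - (n+1) = i0 - n - 1 by omega]
          exact this
        · rw [h1]
          rw [glue_le i0 D U le_rfl, glue_gt i0 D U (by omega), Nat.sub_self, hD0,
            show i0 + 1 - i0 = 1 by omega]
          have h0n2 : 0 < n2 := by omega
          have := hUinc 0 h0n2
          rwa [hU0] at this
        · rw [glue_gt i0 D U (by omega : ¬ n ≤ i0), glue_gt i0 D U (by omega : ¬ n + 1 ≤ i0)]
          have := hUinc (n - i0) (by omega)
          have e2 : U (n + 1 - i0) = U (n - i0 + 1) :=
            congrArg U (by omega)
          rw [e2]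
          exact this
      have hgmono : StrictMono (fun w : Fin (nb+1) => aSum k a (glue i0 D U w.val)) := by
        intro w w' hww
        exact lt_of_consec (fun n => aSum k a (glue i0 D U n)) nb hgc w.val w'.val hww
          (Nat.lt_succ_iff.mp w'.isLt)
      have hgs : ∀ x : Fin (nb+1), (fun w : Fin (nb+1) => aSum k a (glue i0 D U w.val)) x
          ∈ hfin.toFinset :=
        fun x => hmemF _ (hgmem x.val (Nat.lt_succ_iff.mp x.isLt))
      have hgeq := Finset.orderEmbOfFin_unique hcardF hgs hgmono
      have hfg : (fun w : Fin (nb+1) => aSum k a (glue i0 D U w.val)) = f := by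
        rw [hgeq, hfeq]
      have heval := congrFun hfg ⟨i0, hi⟩
      simp only at heval
      rw [glue_le i0 D U le_rfl, Nat.sub_self, hD0] at heval
      exact heval
    have hdet : ∀ x y, InR k r h x → InR k r h y → Sw k x = Sw k y →
        aSum k a x = aSum k a y := by
      intro x y hx hy hSwxy
      have hxlt : (Sw k x - Sw k (sminT I δ r)).toNat < nb + 1 := by
        have h1 := hblo x hx; have h2 := hbhi x hx; omega
      have h1 := hkey x hx hxlt
      have h2 := hkey y hy (by omega)
      rw [h1, h2]
      have hvals : (Sw k x - Sw k (sminT I δ r)).toNat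
          = (Sw k y - Sw k (sminT I δ r)).toNat := by rw [hSwxy]
      exact congrArg f (Fin.ext hvals)
    have hgap : ∀ j, j + 1 < k → a (j+1) - a j = a 1 - a 0 := by
      intro j hj
      rcases Nat.lt_or_ge j 2 with hj2 | hj2
      · interval_cases j
        · rfl
        · have e13 := gaps_eq k h r a hr hh2 hhk 1 3 (by omega) (by omega) hdet
          have e03 := gaps_eq k h r a hr hh2 hhk 0 3 (by omega) (by omega) hdet
          linarith
      · have := gaps_eq k h r a hr hh2 hhk 0 j (by omega) (by omega) hdet
        linarith
    have hapos : (0:ℤ) < a 1 - a 0 := by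
      have := ha 0 1 (by omega) (by omega)
      omega
    refine ⟨a 1 - a 0, hapos, ?_⟩
    intro i
    induction i with
    | zero => intro _; simp
    | succ i ih =>
      intro hik
      have h1 := ih (by omega)
      have h2 := hgap i hik
      push_cast
      linarith
  · -- reverse: AP implies cardinality equality
    rintro ⟨d, hd, hAP⟩
    have hform : ∀ s, InR k r h s → aSum k a s = (h:ℤ) * a 0 + d * Sw k s := by
      intro s hs
      unfold aSum Sw
      have e : ∀ i ∈ range k, (s i : ℤ) * a i = a 0 * (s i : ℤ) + d * ((i:ℤ) * (s i:ℤ)) := by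
        intro i hi
        simp only [mem_range] at hi
        rw [hAP i hi]
        ring
      rw [Finset.sum_congr rfl e, Finset.sum_add_distrib, ← Finset.mul_sum, ← Finset.mul_sum]
      have e2 : ∑ i ∈ range k, (s i : ℤ) = (h:ℤ) := by
        have := hs.2.2
        push_cast [← this]
        rfl
      rw [e2]
      ring
    have hinj : Function.Injective (fun w : ℤ => (h:ℤ) * a 0 + d * w) := by
      intro x y hxy
      simp only at hxy
      have : d * x = d * y := by linarith
      exact mul_left_cancel₀ (ne_of_gt hd) this
    have hset : genSumset k a r h = (fun w : ℤ => (h:ℤ) * a 0 + d * w) ''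
        (Set.Icc (Sw k (sminT I δ r)) (Sw k (smaxT k M θ r))) := by
      ext z
      constructor
      · intro hz
        obtain ⟨s, hcap, hsum, rfl⟩ := hz
        have hs'R : InR k r h (truncT k s) := by
          refine ⟨?_, ?_, ?_⟩
          · intro i hi
            rw [truncT_lt k s hi]
            exact hcap i hi
          · intro i hi
            rw [truncT_ge k s (by omega)]
          · have e3 : ∑ i ∈ range k, truncT k s i = ∑ i ∈ range k, s i :=
              Finset.sum_congr rfl (fun i hi => truncT_lt k s (mem_range.mp hi))
            rw [e3, hsum]
        refine ⟨Sw k (truncT k s),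
          ⟨hblo _ hs'R, hbhi _ hs'R⟩, ?_⟩
        have e4 : aSum k a (truncT k s)
            = ∑ i ∈ range k, (s i:ℤ) * a i := by
          unfold aSum
          exact Finset.sum_congr rfl
            (fun i hi => by rw [truncT_lt k s (mem_range.mp hi)])
        simp only
        rw [← e4]
        exact (hform _ hs'R).symm
      · rintro ⟨w, hw, rfl⟩
        simp only [Set.mem_Icc] at hw
        obtain ⟨P, hP0, hPmem, _⟩ := chain_up k h r a (Sw k (smaxT k M θ r)) hstepUp
          (sminT I δ r) hsminR ((w - Sw k (sminT I δ r)).toNat) (by omega)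
        obtain ⟨hPR, hPSw⟩ := hPmem _ le_rfl
        refine ⟨P ((w - Sw k (sminT I δ r)).toNat), hPR.1, hPR.2.2, ?_⟩
        have hSww : Sw k (P ((w - Sw k (sminT I δ r)).toNat)) = w := by
          rw [hPSw]; omega
        have := hform _ hPR
        rw [hSww] at this
        simp only
        rw [← this]
        rfl
    rw [hset, Set.ncard_image_of_injective _ hinj, ← Finset.coe_Icc, Set.ncard_coe_finset,
      Int.card_Icc, hLval]
    omega
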